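/- Let C be a finitely complete centralic category in which regular epimorphisms are stable under binary products, let q : A → A' be a regular epimorphism and f : A' → Z a morphism. If f ∘ q is central then f is central. Moreover, if C is in addition a regular category, then f ∘ q symmetrizable implies f symmetrizable. -/

import Mathlib

open CategoryTheory CategoryTheory.Limits

universe v u

/-- A pointed category with binary products is *centralic*. -/
def Centralic (C : Type u) [Category.{v} C] [HasZeroObject C] [HasZeroMorphisms C]
    [HasBinaryProducts C] : Prop :=
  ∀ ⦃X Y Z S : C⦄ (f : X ⨯ Y ⟶ Z) (x x' : S ⟶ X) (y : S ⟶ Y),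
    prod.lift x 0 ≫ f = prod.lift x' 0 ≫ f →
    prod.lift x y ≫ f = prod.lift x' y ≫ f

/-- `ρ : A ⨯ B ⟶ X` is a cooperator for `f : A ⟶ X` and `g : B ⟶ X`. -/
def IsCooperator {C : Type u} [Category.{v} C] [HasZeroObject C] [HasZeroMorphisms C]
    [HasBinaryProducts C] {A B X : C} (f : A ⟶ X) (g : B ⟶ X) (ρ : A ⨯ B ⟶ X) : Prop :=
  prod.lift (𝟙 A) 0 ≫ ρ = f ∧ prod.lift 0 (𝟙 B) ≫ ρ = g

/-- Two morphisms with common codomain commute if they admit a cooperator. -/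
def Commutes {C : Type u} [Category.{v} C] [HasZeroObject C] [HasZeroMorphisms C]
    [HasBinaryProducts C] {A B X : C} (f : A ⟶ X) (g : B ⟶ X) : Prop :=
  ∃ ρ : A ⨯ B ⟶ X, IsCooperator f g ρ

/-- A morphism `f : A ⟶ B` is central if it commutes with `𝟙 B`. -/
def Central {C : Type u} [Category.{v} C] [HasZeroObject C] [HasZeroMorphisms C]
    [HasBinaryProducts C] {A B : C} (f : A ⟶ B) : Prop :=
  Commutes f (𝟙 B)

/-- `q : X ⟶ Q` is a coequalizer of `u v : A ⟶ X`. -/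
def IsCoequalizerDiagram {C : Type u} [Category.{v} C] {A X Q : C}
    (u v : A ⟶ X) (q : X ⟶ Q) : Prop :=
  u ≫ q = v ≫ q ∧ ∀ ⦃Z : C⦄ (h : X ⟶ Z), u ≫ h = v ≫ h → ∃! t : Q ⟶ Z, q ≫ t = h

/-- A morphism is a regular epimorphism if it is the coequalizer of some pair. -/
def IsRegularEpimorphism {C : Type u} [Category.{v} C] {X Q : C} (q : X ⟶ Q) : Prop :=
  ∃ (A : C) (u v : A ⟶ X), IsCoequalizerDiagram u v q

/-- Regular epimorphisms are stable under binary products. -/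
def RegularEpisStableUnderProducts (C : Type u) [Category.{v} C] [HasBinaryProducts C] : Prop :=
  ∀ ⦃X₁ Q₁ X₂ Q₂ : C⦄ (q₁ : X₁ ⟶ Q₁) (q₂ : X₂ ⟶ Q₂),
    IsRegularEpimorphism q₁ → IsRegularEpimorphism q₂ →
    IsRegularEpimorphism (prod.map q₁ q₂)

/-- A morphism `f` is symmetrizable if it is central, and has an inverse in the
monoid of central morphisms under `f ⋆ g := ρ_f ∘ ⟨1_X, g⟩`. -/
def Symmetrizable {C : Type u} [Category.{v} C] [HasZeroObject C] [HasZeroMorphisms C]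
    [HasBinaryProducts C] {X Y : C} (f : X ⟶ Y) : Prop :=
  ∃ ρf : X ⨯ Y ⟶ Y, IsCooperator f (𝟙 Y) ρf ∧
    ∃ g : X ⟶ Y, Central g ∧ prod.lift (𝟙 X) g ≫ ρf = 0

/-- `C` is a regular category: finitely complete, kernel pairs admit coequalizers,
and regular epimorphisms are stable under pullback. -/
def IsRegularCat (C : Type u) [Category.{v} C] [HasFiniteLimits C] : Prop :=
  (∀ ⦃X Y : C⦄ (f : X ⟶ Y), ∃ (Q : C) (q : X ⟶ Q),
      IsCoequalizerDiagram (pullback.fst f f) (pullback.snd f f) q) ∧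
  (∀ ⦃X Y Y' : C⦄ (f : X ⟶ Y) (g : Y' ⟶ Y),
      IsRegularEpimorphism f → IsRegularEpimorphism (pullback.snd f g))

section Helpers

variable {C : Type u} [Category.{v} C]

theorem regEpi_cancel {X Q : C} {q : X ⟶ Q} (hq : IsRegularEpimorphism q)
    {Z : C} {a b : Q ⟶ Z} (hab : q ≫ a = q ≫ b) : a = b := by
  obtain ⟨A, u, v, huv, hcoeq⟩ := hq
  obtain ⟨t, -, huniq⟩ := hcoeq (q ≫ a)
    (by rw [← Category.assoc, ← Category.assoc, huv])
  exact (huniq a rfl).trans (huniq b hab.symm).symm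

theorem id_isRegEpi (Z : C) : IsRegularEpimorphism (𝟙 Z) :=
  ⟨Z, 𝟙 Z, 𝟙 Z, rfl, fun W h _ =>
    ⟨h, Category.id_comp h, fun t ht => by simpa using ht⟩⟩

variable [HasZeroObject C] [HasZeroMorphisms C] [HasBinaryProducts C]

theorem lift_left_eq {A Z S : C} (a : S ⟶ A) :
    prod.lift a (0 : S ⟶ Z) = a ≫ prod.lift (𝟙 A) 0 := by
  apply Limits.prod.hom_ext <;> simp

theorem lift_right_eq {A Z S : C} (z : S ⟶ Z) :
    prod.lift (0 : S ⟶ A) z = z ≫ prod.lift 0 (𝟙 Z) := by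
  apply Limits.prod.hom_ext <;> simp

theorem lift_diag_eq {A Z S : C} (a : S ⟶ A) (g : A ⟶ Z) :
    prod.lift a (a ≫ g) = a ≫ prod.lift (𝟙 A) g := by
  apply Limits.prod.hom_ext <;> simp

theorem coop_zero_left {A Z : C} {k : A ⟶ Z} {ρ : A ⨯ Z ⟶ Z}
    (hρ : IsCooperator k (𝟙 Z) ρ) {S : C} (z : S ⟶ Z) :
    prod.lift (0 : S ⟶ A) z ≫ ρ = z := by
  rw [lift_right_eq, Category.assoc, hρ.2, Category.comp_id]

theorem coop_zero_right {A Z : C} {k : A ⟶ Z} {ρ : A ⨯ Z ⟶ Z}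
    (hρ : IsCooperator k (𝟙 Z) ρ) {S : C} (a : S ⟶ A) :
    prod.lift a (0 : S ⟶ Z) ≫ ρ = a ≫ k := by
  rw [lift_left_eq, Category.assoc, hρ.1]

/-- Descend a morphism `A ⨯ Z ⟶ W` along `q ⨯ 𝟙`. -/
theorem descend_along (hC : Centralic C) (hstab : RegularEpisStableUnderProducts C)
    {A A' Z W : C} {q : A ⟶ A'} (hq : IsRegularEpimorphism q)
    (χ : A ⨯ Z ⟶ W)
    (hcomp : ∀ ⦃S : C⦄ (x x' : S ⟶ A), x ≫ q = x' ≫ q →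
      prod.lift x (0 : S ⟶ Z) ≫ χ = prod.lift x' 0 ≫ χ) :
    ∃ χ' : A' ⨯ Z ⟶ W, prod.map q (𝟙 Z) ≫ χ' = χ := by
  obtain ⟨B, u, v, huv, hcoeq⟩ := hstab q (𝟙 Z) hq (id_isRegEpi Z)
  have h1 : (u ≫ prod.fst) ≫ q = (v ≫ prod.fst) ≫ q := by
    have := huv =≫ prod.fst
    simpa using this
  have h2 : u ≫ prod.snd = v ≫ prod.snd := by
    have := huv =≫ prod.snd
    simpa using this
  have hu : u = prod.lift (u ≫ prod.fst) (u ≫ prod.snd) := by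
    apply Limits.prod.hom_ext <;> simp [prod.lift_fst, prod.lift_snd, prod.lift_fst_assoc, prod.lift_snd_assoc]
  have hv : v = prod.lift (v ≫ prod.fst) (v ≫ prod.snd) := by
    apply Limits.prod.hom_ext <;> simp [prod.lift_fst, prod.lift_snd, prod.lift_fst_assoc, prod.lift_snd_assoc]
  have key : u ≫ χ = v ≫ χ := by
    have hc := hC χ (u ≫ prod.fst) (v ≫ prod.fst) (u ≫ prod.snd) (hcomp _ _ h1)
    rw [hu, hv, ← h2]
    exact hc
  obtain ⟨t, ht, -⟩ := hcoeq χ key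
  exact ⟨t, ht⟩

/-- Descend a cooperator for `(q ≫ f, 𝟙)` to a cooperator for `(f, 𝟙)`. -/
theorem descend_coop (hC : Centralic C) (hstab : RegularEpisStableUnderProducts C)
    {A A' Z : C} {q : A ⟶ A'} (hq : IsRegularEpimorphism q) (f : A' ⟶ Z)
    {ρ : A ⨯ Z ⟶ Z} (hρ : IsCooperator (q ≫ f) (𝟙 Z) ρ) :
    ∃ ρ' : A' ⨯ Z ⟶ Z, prod.map q (𝟙 Z) ≫ ρ' = ρ ∧ IsCooperator f (𝟙 Z) ρ' := by
  obtain ⟨ρ', hmap⟩ := descend_along hC hstab hq ρ (fun S x x' hxx' => by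
    rw [coop_zero_right hρ, coop_zero_right hρ, ← Category.assoc, ← Category.assoc, hxx'])
  refine ⟨ρ', hmap, ?_, ?_⟩
  · apply regEpi_cancel hq
    have h3 : q ≫ prod.lift (𝟙 A') 0 ≫ ρ' = (prod.lift (𝟙 A) 0 ≫ prod.map q (𝟙 Z)) ≫ ρ' := by
      rw [← Category.assoc]
      congr 1
      apply Limits.prod.hom_ext <;> simp
    rw [h3, Category.assoc, hmap, hρ.1]
  · have h4 : prod.lift (0 : Z ⟶ A') (𝟙 Z) = prod.lift (0 : Z ⟶ A) (𝟙 Z) ≫ prod.map q (𝟙 Z) := by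
      apply Limits.prod.hom_ext <;> simp
    rw [h4, Category.assoc, hmap, hρ.2]

/-- The key "ψ" identity: `ρ(a, σ(a, z)) = z`. -/
theorem psi_eq (hC : Centralic C) {A Z : C} {h g : A ⟶ Z}
    {ρ σ : A ⨯ Z ⟶ Z}
    (hρ : IsCooperator h (𝟙 Z) ρ) (hσ : IsCooperator g (𝟙 Z) σ)
    (hinv : prod.lift (𝟙 A) g ≫ ρ = 0)
    {S : C} (a : S ⟶ A) (z : S ⟶ Z) :
    prod.lift a (prod.lift a z ≫ σ) ≫ ρ = z := by
  let Φ : (A ⨯ A) ⨯ Z ⟶ Z :=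
    prod.lift (prod.fst ≫ prod.fst)
      (prod.lift (prod.fst ≫ prod.snd) prod.snd ≫ σ) ≫ ρ
  have eval : ∀ (w : S ⟶ A ⨯ A) (y : S ⟶ Z),
      prod.lift w y ≫ Φ =
        prod.lift (w ≫ prod.fst) (prod.lift (w ≫ prod.snd) y ≫ σ) ≫ ρ := by
    intro w y
    show prod.lift w y ≫ _ ≫ ρ = _
    rw [← Category.assoc]
    congr 1
    apply Limits.prod.hom_ext
    · simp [prod.lift_fst, prod.lift_snd, prod.lift_fst_assoc, prod.lift_snd_assoc]
    · rw [Category.assoc, prod.lift_snd, prod.lift_snd, ← Category.assoc, prod.comp_lift]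
      simp [prod.lift_fst, prod.lift_snd, prod.lift_fst_assoc, prod.lift_snd_assoc]
  have hyp : prod.lift (prod.lift a a) (0 : S ⟶ Z) ≫ Φ =
      prod.lift (0 : S ⟶ A ⨯ A) 0 ≫ Φ := by
    rw [eval, eval]
    simp only [prod.lift_fst, prod.lift_snd, zero_comp]
    rw [coop_zero_right hσ, coop_zero_right hσ, lift_diag_eq, Category.assoc, hinv,
      comp_zero, zero_comp, lift_left_eq, Category.assoc, hρ.1]
    simp
  have hc := hC Φ (prod.lift a a) 0 z hyp
  rw [eval, eval] at hc
  simp only [prod.lift_fst, prod.lift_snd, zero_comp] at hc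
  rw [coop_zero_left hσ, coop_zero_left hρ] at hc
  exact hc

/-- Cancellation: `ρ(a, z₁) = ρ(a, z₂)` implies `z₁ = z₂`. -/
theorem rho_cancel (hC : Centralic C) {A Z : C} {h g : A ⟶ Z}
    {ρ σ : A ⨯ Z ⟶ Z}
    (hρ : IsCooperator h (𝟙 Z) ρ) (hσ : IsCooperator g (𝟙 Z) σ)
    (hinv : prod.lift (𝟙 A) g ≫ ρ = 0)
    {S : C} {a : S ⟶ A} {z₁ z₂ : S ⟶ Z}
    (heq : prod.lift a z₁ ≫ ρ = prod.lift a z₂ ≫ ρ) : z₁ = z₂ := by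
  let Ω : (A ⨯ Z) ⨯ A ⟶ Z :=
    prod.lift (prod.fst ≫ prod.fst)
      (prod.lift prod.snd (prod.fst ≫ prod.snd) ≫ σ) ≫ ρ
  have eval : ∀ (w : S ⟶ A ⨯ Z) (b : S ⟶ A),
      prod.lift w b ≫ Ω =
        prod.lift (w ≫ prod.fst) (prod.lift b (w ≫ prod.snd) ≫ σ) ≫ ρ := by
    intro w b
    show prod.lift w b ≫ _ ≫ ρ = _
    rw [← Category.assoc]
    congr 1
    apply Limits.prod.hom_ext
    · simp [prod.lift_fst, prod.lift_snd, prod.lift_fst_assoc, prod.lift_snd_assoc]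
    · rw [Category.assoc, prod.lift_snd, prod.lift_snd, ← Category.assoc, prod.comp_lift]
      simp [prod.lift_fst, prod.lift_snd, prod.lift_fst_assoc, prod.lift_snd_assoc]
  have hyp : prod.lift (prod.lift a z₁) (0 : S ⟶ A) ≫ Ω =
      prod.lift (prod.lift a z₂) (0 : S ⟶ A) ≫ Ω := by
    rw [eval, eval]
    simp only [prod.lift_fst, prod.lift_snd]
    rw [coop_zero_left hσ, coop_zero_left hσ]
    exact heq
  have hc := hC Ω (prod.lift a z₁) (prod.lift a z₂) a hyp
  rw [eval, eval] at hc
  simp only [prod.lift_fst, prod.lift_snd] at hc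
  rw [psi_eq hC hρ hσ hinv, psi_eq hC hρ hσ hinv] at hc
  exact hc

end Helpers

theorem stmt13 (C : Type u) [Category.{v} C] [HasZeroObject C] [HasZeroMorphisms C]
    [HasFiniteLimits C] (hC : Centralic C)
    (hstab : RegularEpisStableUnderProducts C)
    {A A' Z : C} (q : A ⟶ A') (hq : IsRegularEpimorphism q) (f : A' ⟶ Z) :
    (Central (q ≫ f) → Central f) ∧
      (IsRegularCat C → Symmetrizable (q ≫ f) → Symmetrizable f) := by
  constructor
  · rintro ⟨ρ, hρ⟩
    obtain ⟨ρ', -, hcoop⟩ := descend_coop hC hstab hq f hρ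
    exact ⟨ρ', hcoop⟩
  · rintro - ⟨ρ, hρ, g, ⟨σ, hσ⟩, hinv⟩
    obtain ⟨ρ', hmap, hcoop⟩ := descend_coop hC hstab hq f hρ
    -- the symmetrizer `g` coequalizes any pair coequalized by `q`
    obtain ⟨B, u, v, huv, hcoeq⟩ := hq
    have hug : u ≫ g = v ≫ g := by
      have hpre : prod.lift u (0 : B ⟶ Z) ≫ ρ = prod.lift v 0 ≫ ρ := by
        rw [coop_zero_right hρ, coop_zero_right hρ, ← Category.assoc, ← Category.assoc, huv]
      have hcent := hC ρ u v (u ≫ g) hpre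
      have h1 : prod.lift u (u ≫ g) ≫ ρ = 0 := by
        rw [lift_diag_eq, Category.assoc, hinv, comp_zero]
      have h2 : prod.lift v (v ≫ g) ≫ ρ = 0 := by
        rw [lift_diag_eq, Category.assoc, hinv, comp_zero]
      exact rho_cancel hC hρ hσ hinv (by rw [← hcent, h1, h2])
    obtain ⟨g', hg', -⟩ := hcoeq g hug
    -- descend the cooperator σ of g along q ⨯ 𝟙
    obtain ⟨σ', hσmap⟩ := descend_along hC hstab ⟨B, u, v, huv, hcoeq⟩ σ
      (fun S x x' hxx' => by
        rw [coop_zero_right hσ, coop_zero_right hσ, ← hg', ← Category.assoc, ← Category.assoc,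
          hxx'])
    have hqepi : ∀ {W : C} {a b : A' ⟶ W}, q ≫ a = q ≫ b → a = b :=
      fun hab => regEpi_cancel ⟨B, u, v, huv, hcoeq⟩ hab
    refine ⟨ρ', hcoop, g', ⟨σ', ?_, ?_⟩, ?_⟩
    · -- prod.lift (𝟙 A') 0 ≫ σ' = g'
      apply hqepi
      have h3 : q ≫ prod.lift (𝟙 A') 0 ≫ σ' = (prod.lift (𝟙 A) 0 ≫ prod.map q (𝟙 Z)) ≫ σ' := by
        rw [← Category.assoc]
        congr 1
        apply Limits.prod.hom_ext <;> simp
      rw [h3, Category.assoc, hσmap, hσ.1, hg']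
    · have h4 : prod.lift (0 : Z ⟶ A') (𝟙 Z) =
          prod.lift (0 : Z ⟶ A) (𝟙 Z) ≫ prod.map q (𝟙 Z) := by
        apply Limits.prod.hom_ext <;> simp
      rw [h4, Category.assoc, hσmap, hσ.2]
    · -- prod.lift (𝟙 A') g' ≫ ρ' = 0
      apply hqepi
      have h5 : q ≫ prod.lift (𝟙 A') g' ≫ ρ' =
          (prod.lift (𝟙 A) g ≫ prod.map q (𝟙 Z)) ≫ ρ' := by
        rw [← Category.assoc]
        congr 1
        apply Limits.prod.hom_ext <;> simp [hg']
      rw [h5, Category.assoc, hmap, hinv, comp_zero]
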